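/- For f = (y³+x⁷)(y³+x¹⁰), the dimension of the quotient ℂ-vector space I^es(f)/⟨f, j(f)⟩ equals 7, where I^es(f) is the ideal generated by j(f) together with all monomials x^α y^β of Newton order ≥ 1 with respect to the Newton diagram of f (the diagram with faces given by the affine functionals n₁ = β + (3/10)α − 51/10 and n₂ = β + (3/7)α − 6, a monomial having Newton order ≥ 1 iff min(n₁(α,β), n₂(α,β)) ≥ 0). -/

import Mathlib

noncomputable section

/-- The formal power series ring ℂ[[x,y]]. -/
abbrev R2 := MvPowerSeries (Fin 2) ℂ

/-- Partial derivative of a formal power series in two variables. -/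
def pder (i : Fin 2) (f : R2) : R2 :=
  fun d => ((d i : ℕ) + 1 : ℂ) * MvPowerSeries.coeff (d + Finsupp.single i 1) f

/-- The maximal ideal 𝔪 = ⟨x,y⟩ of ℂ[[x,y]]. -/
def mIdeal : Ideal R2 := Ideal.span {MvPowerSeries.X 0, MvPowerSeries.X 1}

/-- dim_ℂ B/A for ideals A ⊆ B of ℂ[[x,y]]. -/
def qdim (A B : Ideal R2) : ℕ :=
  Module.finrank ℂ ((B.map (Ideal.Quotient.mk A)).restrictScalars ℂ)
/-- f = (y³+x⁷)(y³+x¹⁰) ∈ ℂ[[x,y]]. -/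
def fEx : R2 :=
  (MvPowerSeries.X 1 ^ 3 + MvPowerSeries.X 0 ^ 7) *
  (MvPowerSeries.X 1 ^ 3 + MvPowerSeries.X 0 ^ 10)

/-- A monomial x^α y^β has Newton order ≥ 1 for f = (y³+x⁷)(y³+x¹⁰) iff
min(β + (3/10)α − 51/10, β + (3/7)α − 6) ≥ 0. -/
def newtonOrderGeOne (a b : ℕ) : Prop :=
  0 ≤ min ((b : ℚ) + 3/10 * a - 51/10) ((b : ℚ) + 3/7 * a - 6)

/-- The equisingularity ideal I^es(f) = ⟨j(f)⟩ + ⟨monomials of Newton order ≥ 1⟩. -/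
def IesEx : Ideal R2 :=
  Ideal.span {pder 0 fEx, pder 1 fEx} ⊔
    Ideal.span {g : R2 | ∃ a b : ℕ, newtonOrderGeOne a b ∧
      g = MvPowerSeries.X 0 ^ a * MvPowerSeries.X 1 ^ b}


open MvPowerSeries Finsupp

/-! ### Exponent bookkeeping -/

def E (a b : ℕ) : Fin 2 →₀ ℕ := Finsupp.single 0 a + Finsupp.single 1 b
@[simp] lemma E_apply0 (a b : ℕ) : E a b 0 = a := by simp [E, Finsupp.single_apply]
@[simp] lemma E_apply1 (a b : ℕ) : E a b 1 = b := by simp [E, Finsupp.single_apply]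
lemma eqE (d : Fin 2 →₀ ℕ) : d = E (d 0) (d 1) := by ext i; fin_cases i <;> simp
lemma E_inj (a b c d : ℕ) : E a b = E c d ↔ a = c ∧ b = d := by
  constructor
  · intro h
    exact ⟨by rw [← E_apply0 a b, h, E_apply0], by rw [← E_apply1 a b, h, E_apply1]⟩
  · rintro ⟨rfl, rfl⟩; rfl
lemma E_le (u v a b : ℕ) : E u v ≤ E a b ↔ u ≤ a ∧ v ≤ b := by
  rw [Finsupp.le_def]
  constructor
  · intro h; exact ⟨by simpa using h 0, by simpa using h 1⟩
  · intro ⟨h1, h2⟩ i; fin_cases i <;> simpa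
lemma E_sub (u v a b : ℕ) : E a b - E u v = E (a-u) (b-v) := by
  ext i; fin_cases i <;> simp [E, Finsupp.single_apply]
lemma E_add (u v a b : ℕ) : E a b + E u v = E (a+u) (b+v) := by
  ext i; fin_cases i <;> simp [E, Finsupp.single_apply]

def M (a b : ℕ) (c : ℂ) : R2 := monomial (E a b) c
abbrev X0 : R2 := MvPowerSeries.X 0
abbrev X1 : R2 := MvPowerSeries.X 1
lemma XXE (a b : ℕ) : X0^a * X1^b = M a b 1 := by
  rw [X_pow_eq, X_pow_eq, monomial_mul_monomial, one_mul]; rfl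
lemma coeffME (p q a b : ℕ) (c : ℂ) :
    coeff (E p q) (M a b c) = if p = a ∧ q = b then c else 0 := by
  simp [M, coeff_monomial, E_inj]
lemma Mnat (a b n : ℕ) : M a b (n:ℂ) = (n : R2) * (X0^a * X1^b) := by
  rw [XXE, M, M, show ((n:R2)) = MvPowerSeries.C (σ := Fin 2) (R := ℂ) (n:ℂ) from by rw [map_natCast],
    ← monomial_zero_eq_C_apply, monomial_mul_monomial, zero_add, mul_one]

/-! ### Explicit form of f and its partial derivatives -/

lemma hfEx : fEx = M 0 6 1 + M 7 3 1 + M 10 3 1 + M 17 0 1 := by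
  have : fEx = X0^0*X1^6 + X0^7*X1^3 + X0^10*X1^3 + X0^17*X1^0 := by
    simp only [fEx]; ring
  rw [this, XXE, XXE, XXE, XXE]
lemma Esingle0 (a b : ℕ) : E a b + Finsupp.single 0 1 = E (a+1) b := by
  ext i; fin_cases i <;> simp [E, Finsupp.single_apply]
lemma Esingle1 (a b : ℕ) : E a b + Finsupp.single 1 1 = E a (b+1) := by
  ext i; fin_cases i <;> simp [E, Finsupp.single_apply]
lemma hpd0 : pder 0 fEx = M 6 3 ((7:ℕ):ℂ) + M 9 3 ((10:ℕ):ℂ) + M 16 0 ((17:ℕ):ℂ) := by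
  apply MvPowerSeries.ext; intro d
  obtain ⟨a, b, rfl⟩ : ∃ a b, d = E a b := ⟨d 0, d 1, eqE d⟩
  have lhs : coeff (E a b) (pder 0 fEx) = ((a:ℂ)+1) * coeff (E (a+1) b) fEx := by
    show pder 0 fEx (E a b) = _
    simp only [pder, E_apply0, Esingle0]
  rw [lhs, hfEx]
  simp only [map_add, coeffME]
  by_cases h1 : a = 6 ∧ b = 3
  · obtain ⟨rfl, rfl⟩ := h1; norm_num
  · by_cases h2 : a = 9 ∧ b = 3
    · obtain ⟨rfl, rfl⟩ := h2; norm_num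
    · by_cases h3 : a = 16 ∧ b = 0
      · obtain ⟨rfl, rfl⟩ := h3; norm_num
      · rw [if_neg (by omega), if_neg (by omega), if_neg (by omega), if_neg (by omega),
           if_neg h1, if_neg h2, if_neg h3]
        norm_num
lemma hpd1 : pder 1 fEx = M 0 5 ((6:ℕ):ℂ) + M 7 2 ((3:ℕ):ℂ) + M 10 2 ((3:ℕ):ℂ) := by
  apply MvPowerSeries.ext; intro d
  obtain ⟨a, b, rfl⟩ : ∃ a b, d = E a b := ⟨d 0, d 1, eqE d⟩
  have lhs : coeff (E a b) (pder 1 fEx) = ((b:ℂ)+1) * coeff (E a (b+1)) fEx := by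
    show pder 1 fEx (E a b) = _
    simp only [pder, E_apply1, Esingle1]
  rw [lhs, hfEx]
  simp only [map_add, coeffME]
  by_cases h1 : a = 0 ∧ b = 5
  · obtain ⟨rfl, rfl⟩ := h1; norm_num
  · by_cases h2 : a = 7 ∧ b = 2
    · obtain ⟨rfl, rfl⟩ := h2; norm_num
    · by_cases h3 : a = 10 ∧ b = 2
      · obtain ⟨rfl, rfl⟩ := h3; norm_num
      · rw [if_neg (by omega), if_neg (by omega), if_neg (by omega), if_neg (by omega),
           if_neg h1, if_neg h2, if_neg h3]
        norm_num
lemma hpd0' : pder 0 fEx = 7 * (X0^6*X1^3) + 10 * (X0^9*X1^3) + 17 * (X0^16*X1^0) := by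
  rw [hpd0, Mnat, Mnat, Mnat]; push_cast; ring
lemma hpd1' : pder 1 fEx = 6 * (X0^0*X1^5) + 3 * (X0^7*X1^2) + 3 * (X0^10*X1^2) := by
  rw [hpd1, Mnat, Mnat, Mnat]; push_cast; ring

/-! ### The Tjurina ideal and unit trick -/

def Aid : Ideal R2 := Ideal.span {fEx, pder 0 fEx, pder 1 fEx}
lemma hf_mem : fEx ∈ Aid := Ideal.subset_span (by simp)
lemma hp0_mem : pder 0 fEx ∈ Aid := Ideal.subset_span (by simp)
lemma hp1_mem : pder 1 fEx ∈ Aid := Ideal.subset_span (by simp)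
lemma mem_of_unit_mul (A : Ideal R2) (m w : R2) (hw : IsUnit w) (h : m * w ∈ A) : m ∈ A := by
  obtain ⟨U, rfl⟩ := hw
  have := A.mul_mem_right (↑U⁻¹) h
  simpa [mul_assoc] using this

lemma cert1 : (X1^6 : R2) ∈ Aid := by
  apply mem_of_unit_mul Aid _ ((63) + (27)*X0^3 + (-90)*X0^6) ?hu
  case hu =>
    rw [MvPowerSeries.isUnit_iff_constantCoeff]
    simp only [map_add, map_sub, map_mul, map_pow, map_ofNat, map_one, map_neg, map_intCast, map_natCast, constantCoeff_X]
    norm_num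
  have key : ((X1^6 : R2)) * ((63) + (27)*X0^3 + (-90)*X0^6) = ((-357) + (-867)*X0^3 + (-510)*X0^6) * fEx + ((21)*X0^1 + (51)*X0^4 + (30)*X0^7) * (pder 0 fEx) + ((70)*X1^1 + (149)*X0^3*X1^1 + (70)*X0^6*X1^1) * (pder 1 fEx) := by
    rw [hpd0', hpd1', show fEx = ((X1:R2)^3 + X0^7) * (X1^3 + X0^10) from rfl]
    ring
  rw [key]
  exact add_mem (add_mem (Ideal.mul_mem_left _ _ hf_mem) (Ideal.mul_mem_left _ _ hp0_mem)) (Ideal.mul_mem_left _ _ hp1_mem)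

lemma cert2 : (X0^6*X1^5 : R2) ∈ Aid := by
  apply mem_of_unit_mul Aid _ ((21) + (-51)*X0^3 + (30)*X0^6) ?hu
  case hu =>
    rw [MvPowerSeries.isUnit_iff_constantCoeff]
    simp only [map_add, map_sub, map_mul, map_pow, map_ofNat, map_one, map_neg, map_intCast, map_natCast, constantCoeff_X]
    norm_num
  have key : ((X0^6*X1^5 : R2)) * ((21) + (-51)*X0^3 + (30)*X0^6) = (0) * fEx + ((3)*X1^2 + (3)*X0^3*X1^2) * (pder 0 fEx) + ((-17)*X0^9) * (pder 1 fEx) := by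
    rw [hpd0', hpd1', show fEx = ((X1:R2)^3 + X0^7) * (X1^3 + X0^10) from rfl]
    ring
  rw [key]
  exact add_mem (add_mem (Ideal.mul_mem_left _ _ hf_mem) (Ideal.mul_mem_left _ _ hp0_mem)) (Ideal.mul_mem_left _ _ hp1_mem)

lemma cert3 : (X0^7*X1^3 : R2) ∈ Aid := by
  apply mem_of_unit_mul Aid _ ((63) + (27)*X0^3 + (-90)*X0^6) ?hu
  case hu =>
    rw [MvPowerSeries.isUnit_iff_constantCoeff]
    simp only [map_add, map_sub, map_mul, map_pow, map_ofNat, map_one, map_neg, map_intCast, map_natCast, constantCoeff_X]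
    norm_num
  have key : ((X0^7*X1^3 : R2)) * ((63) + (27)*X0^3 + (-90)*X0^6) = ((714) + (1020)*X0^3) * fEx + ((-42)*X0^1 + (-60)*X0^4) * (pder 0 fEx) + ((-119)*X1^1 + (-170)*X0^3*X1^1) * (pder 1 fEx) := by
    rw [hpd0', hpd1', show fEx = ((X1:R2)^3 + X0^7) * (X1^3 + X0^10) from rfl]
    ring
  rw [key]
  exact add_mem (add_mem (Ideal.mul_mem_left _ _ hf_mem) (Ideal.mul_mem_left _ _ hp0_mem)) (Ideal.mul_mem_left _ _ hp1_mem)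

lemma cert4 : (X0^13*X1^2 : R2) ∈ Aid := by
  apply mem_of_unit_mul Aid _ ((1029) + (-6000)*X0^2*X1^3 + (-3969)*X0^3 + (7140)*X0^6 + (-10200)*X0^9) ?hu
  case hu =>
    rw [MvPowerSeries.isUnit_iff_constantCoeff]
    simp only [map_add, map_sub, map_mul, map_pow, map_ofNat, map_one, map_neg, map_intCast, map_natCast, constantCoeff_X]
    norm_num
  have key : ((X0^13*X1^2 : R2)) * ((1029) + (-6000)*X0^2*X1^3 + (-3969)*X0^3 + (7140)*X0^6 + (-10200)*X0^9) = (0) * fEx + ((-294)*X1^2 + (420)*X0^3*X1^2 + (-600)*X0^6*X1^2) * (pder 0 fEx) + ((343)*X0^6) * (pder 1 fEx) := by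
    rw [hpd0', hpd1', show fEx = ((X1:R2)^3 + X0^7) * (X1^3 + X0^10) from rfl]
    ring
  rw [key]
  exact add_mem (add_mem (Ideal.mul_mem_left _ _ hf_mem) (Ideal.mul_mem_left _ _ hp0_mem)) (Ideal.mul_mem_left _ _ hp1_mem)

lemma cert5 : (X0^17 : R2) ∈ Aid := by
  apply mem_of_unit_mul Aid _ ((9) + (-9)*X0^3) ?hu
  case hu =>
    rw [MvPowerSeries.isUnit_iff_constantCoeff]
    simp only [map_add, map_sub, map_mul, map_pow, map_ofNat, map_one, map_neg, map_intCast, map_natCast, constantCoeff_X]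
    norm_num
  have key : ((X0^17 : R2)) * ((9) + (-9)*X0^3) = ((-42) + (-60)*X0^3) * fEx + ((3)*X0^1 + (3)*X0^4) * (pder 0 fEx) + ((7)*X1^1 + (10)*X0^3*X1^1) * (pder 1 fEx) := by
    rw [hpd0', hpd1', show fEx = ((X1:R2)^3 + X0^7) * (X1^3 + X0^10) from rfl]
    ring
  rw [key]
  exact add_mem (add_mem (Ideal.mul_mem_left _ _ hf_mem) (Ideal.mul_mem_left _ _ hp0_mem)) (Ideal.mul_mem_left _ _ hp1_mem)

lemma cert6 : ((2)*X0^4*X1^5 + X0^11*X1^2 : R2) ∈ Aid := by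
  apply mem_of_unit_mul Aid _ ((147) + (-567)*X0^3 + (720)*X0^6 + (-300)*X0^9) ?hu
  case hu =>
    rw [MvPowerSeries.isUnit_iff_constantCoeff]
    simp only [map_add, map_sub, map_mul, map_pow, map_ofNat, map_one, map_neg, map_intCast, map_natCast, constantCoeff_X]
    norm_num
  have key : (((2)*X0^4*X1^5 + X0^11*X1^2 : R2)) * ((147) + (-567)*X0^3 + (720)*X0^6 + (-300)*X0^9) = (0) * fEx + ((42)*X0^1*X1^2 + (-60)*X0^4*X1^2) * (pder 0 fEx) + ((49)*X0^4 + (-238)*X0^7 + (240)*X0^10) * (pder 1 fEx) := by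
    rw [hpd0', hpd1', show fEx = ((X1:R2)^3 + X0^7) * (X1^3 + X0^10) from rfl]
    ring
  rw [key]
  exact add_mem (add_mem (Ideal.mul_mem_left _ _ hf_mem) (Ideal.mul_mem_left _ _ hp0_mem)) (Ideal.mul_mem_left _ _ hp1_mem)

lemma cert7 : ((2)*X0^5*X1^5 + X0^12*X1^2 : R2) ∈ Aid := by
  apply mem_of_unit_mul Aid _ ((147) + (-567)*X0^3 + (720)*X0^6 + (-300)*X0^9) ?hu
  case hu =>
    rw [MvPowerSeries.isUnit_iff_constantCoeff]
    simp only [map_add, map_sub, map_mul, map_pow, map_ofNat, map_one, map_neg, map_intCast, map_natCast, constantCoeff_X]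
    norm_num
  have key : (((2)*X0^5*X1^5 + X0^12*X1^2 : R2)) * ((147) + (-567)*X0^3 + (720)*X0^6 + (-300)*X0^9) = (0) * fEx + ((42)*X0^2*X1^2 + (-60)*X0^5*X1^2) * (pder 0 fEx) + ((49)*X0^5 + (-238)*X0^8 + (240)*X0^11) * (pder 1 fEx) := by
    rw [hpd0', hpd1', show fEx = ((X1:R2)^3 + X0^7) * (X1^3 + X0^10) from rfl]
    ring
  rw [key]
  exact add_mem (add_mem (Ideal.mul_mem_left _ _ hf_mem) (Ideal.mul_mem_left _ _ hp0_mem)) (Ideal.mul_mem_left _ _ hp1_mem)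

lemma cert8 : ((7)*X0^6*X1^4 + (17)*X0^16*X1^1 : R2) ∈ Aid := by
  apply mem_of_unit_mul Aid _ ((63) + (27)*X0^3 + (-90)*X0^6) ?hu
  case hu =>
    rw [MvPowerSeries.isUnit_iff_constantCoeff]
    simp only [map_add, map_sub, map_mul, map_pow, map_ofNat, map_one, map_neg, map_intCast, map_natCast, constantCoeff_X]
    norm_num
  have key : (((7)*X0^6*X1^4 + (17)*X0^16*X1^1 : R2)) * ((63) + (27)*X0^3 + (-90)*X0^6) = ((-7140)*X0^2*X1^1 + (-10200)*X0^5*X1^1) * fEx + ((63)*X1^1 + (447)*X0^3*X1^1 + (510)*X0^6*X1^1) * (pder 0 fEx) + ((1190)*X0^2*X1^2 + (1700)*X0^5*X1^2) * (pder 1 fEx) := by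
    rw [hpd0', hpd1', show fEx = ((X1:R2)^3 + X0^7) * (X1^3 + X0^10) from rfl]
    ring
  rw [key]
  exact add_mem (add_mem (Ideal.mul_mem_left _ _ hf_mem) (Ideal.mul_mem_left _ _ hp0_mem)) (Ideal.mul_mem_left _ _ hp1_mem)



/-! ### Dual functionals -/

def dgrid : Finset (ℕ × ℕ) := Finset.range 18 ×ˢ Finset.range 7
def lam (D : ℕ → ℕ → ℤ) (h : R2) : ℂ :=
  ∑ p ∈ dgrid, (D p.1 p.2 : ℂ) * coeff (E p.1 p.2) h
def Dvan (D : ℕ → ℕ → ℤ) : Prop := ∀ a b, 18 ≤ a ∨ 7 ≤ b → D a b = 0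

lemma lam_addh (D : ℕ → ℕ → ℤ) (h1 h2 : R2) : lam D (h1 + h2) = lam D h1 + lam D h2 := by
  unfold lam
  rw [← Finset.sum_add_distrib]
  exact Finset.sum_congr rfl fun p _ => by rw [map_add, mul_add]
lemma lam_smulh (D : ℕ → ℕ → ℤ) (c : ℂ) (h : R2) : lam D (c • h) = c * lam D h := by
  unfold lam
  rw [Finset.mul_sum]
  exact Finset.sum_congr rfl fun p _ => by rw [map_smul, smul_eq_mul]; ring
lemma lam_sum {n : ℕ} (D : ℕ → ℕ → ℤ) (x : Fin n → R2) :
    lam D (∑ i, x i) = ∑ i, lam D (x i) := by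
  unfold lam
  simp only [map_sum, Finset.mul_sum]
  exact Finset.sum_comm

lemma lam_shift (D : ℕ → ℕ → ℤ) (hD : Dvan D) (u v : ℕ) (c : ℂ) (h : R2) :
    lam D (h * M u v c) = c * lam (fun a b => D (a+u) (b+v)) h := by
  unfold lam
  rw [Finset.mul_sum]
  have step : ∀ p ∈ dgrid, (D p.1 p.2 : ℂ) * coeff (E p.1 p.2) (h * M u v c)
      = if u ≤ p.1 ∧ v ≤ p.2 then (D p.1 p.2 : ℂ) * coeff (E (p.1-u) (p.2-v)) h * c else 0 := by
    intro p _
    rw [M, coeff_mul_monomial]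
    by_cases hle : u ≤ p.1 ∧ v ≤ p.2
    · rw [if_pos ((E_le u v p.1 p.2).mpr hle), if_pos hle, E_sub]; ring
    · rw [if_neg (fun hh => hle ((E_le u v p.1 p.2).mp hh)), if_neg hle, mul_zero]
  rw [Finset.sum_congr rfl step]
  rw [Finset.sum_ite, Finset.sum_const_zero, add_zero]
  have rhs : ∀ p ∈ dgrid, c * ((D (p.1+u) (p.2+v) : ℂ) * coeff (E p.1 p.2) h)
      = if p.1 + u < 18 ∧ p.2 + v < 7 then (D (p.1+u) (p.2+v) : ℂ) * coeff (E p.1 p.2) h * c else 0 := by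
    intro p _
    by_cases hb : p.1 + u < 18 ∧ p.2 + v < 7
    · rw [if_pos hb]; ring
    · rw [if_neg hb, hD (p.1+u) (p.2+v) (by omega)]; push_cast; ring
  rw [Finset.sum_congr rfl rhs, Finset.sum_ite, Finset.sum_const_zero, add_zero]
  apply Finset.sum_nbij' (fun p => (p.1 - u, p.2 - v)) (fun p => (p.1 + u, p.2 + v))
  · intro a ha
    simp only [Finset.mem_filter, dgrid, Finset.mem_product, Finset.mem_range] at ha ⊢
    omega
  · intro a ha
    simp only [Finset.mem_filter, dgrid, Finset.mem_product, Finset.mem_range] at ha ⊢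
    omega
  · intro a ha
    simp only [Finset.mem_filter, dgrid, Finset.mem_product, Finset.mem_range] at ha
    ext <;> simp <;> omega
  · intro a ha
    simp only [Finset.mem_filter, dgrid, Finset.mem_product, Finset.mem_range] at ha
    ext <;> simp
  · intro a ha
    simp only [Finset.mem_filter, dgrid, Finset.mem_product, Finset.mem_range] at ha
    have h1 : a.1 - u + u = a.1 := by omega
    have h2 : a.2 - v + v = a.2 := by omega
    rw [h1, h2]

lemma lam_mono (D : ℕ → ℕ → ℤ) (p q : ℕ) (hp : p < 18) (hq : q < 7) :
    lam D (M p q 1) = (D p q : ℂ) := by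
  unfold lam
  rw [Finset.sum_eq_single (p,q)]
  · rw [coeffME, if_pos ⟨rfl, rfl⟩, mul_one]
  · intro b _ hbne
    rw [coeffME, if_neg (fun hh => hbne (Prod.ext hh.1 hh.2)), mul_zero]
  · intro hmem
    exact absurd (by simp [dgrid, Finset.mem_product, hp, hq]) hmem

lemma lam_comb3 (c1 c2 c3 : ℤ) (D1 D2 D3 : ℕ → ℕ → ℤ)
    (hc : ∀ a b, c1 * D1 a b + c2 * D2 a b + c3 * D3 a b = 0) (r : R2) :
    (c1:ℂ) * lam D1 r + (c2:ℂ) * lam D2 r + (c3:ℂ) * lam D3 r = 0 := by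
  unfold lam
  rw [Finset.mul_sum, Finset.mul_sum, Finset.mul_sum, ← Finset.sum_add_distrib,
    ← Finset.sum_add_distrib]
  apply Finset.sum_eq_zero
  intro p _
  have h : ((c1 * D1 p.1 p.2 + c2 * D2 p.1 p.2 + c3 * D3 p.1 p.2 : ℤ) : ℂ) = 0 := by
    rw [hc p.1 p.2]; norm_num
  push_cast at h
  linear_combination (coeff (E p.1 p.2) r) * h
lemma lam_comb4 (c1 c2 c3 c4 : ℤ) (D1 D2 D3 D4 : ℕ → ℕ → ℤ)
    (hc : ∀ a b, c1 * D1 a b + c2 * D2 a b + c3 * D3 a b + c4 * D4 a b = 0) (r : R2) :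
    (c1:ℂ) * lam D1 r + (c2:ℂ) * lam D2 r + (c3:ℂ) * lam D3 r + (c4:ℂ) * lam D4 r = 0 := by
  unfold lam
  rw [Finset.mul_sum, Finset.mul_sum, Finset.mul_sum, Finset.mul_sum, ← Finset.sum_add_distrib,
    ← Finset.sum_add_distrib, ← Finset.sum_add_distrib]
  apply Finset.sum_eq_zero
  intro p _
  have h : ((c1 * D1 p.1 p.2 + c2 * D2 p.1 p.2 + c3 * D3 p.1 p.2 + c4 * D4 p.1 p.2 : ℤ) : ℂ) = 0 := by
    rw [hc p.1 p.2]; norm_num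
  push_cast at h
  linear_combination (coeff (E p.1 p.2) r) * h

lemma lam_f_vanish (D : ℕ → ℕ → ℤ) (hD : Dvan D)
    (hc : ∀ a b : ℕ, 1 * D (a+0) (b+6) + 1 * D (a+7) (b+3) + 1 * D (a+10) (b+3) + 1 * D (a+17) (b+0) = 0)
    (r : R2) : lam D (r * fEx) = 0 := by
  rw [hfEx, mul_add, mul_add, mul_add, lam_addh, lam_addh, lam_addh,
    lam_shift D hD 0 6 1, lam_shift D hD 7 3 1, lam_shift D hD 10 3 1, lam_shift D hD 17 0 1]
  have h := lam_comb4 1 1 1 1 (fun a b => D (a+0) (b+6)) (fun a b => D (a+7) (b+3))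
    (fun a b => D (a+10) (b+3)) (fun a b => D (a+17) (b+0)) hc r
  push_cast at h ⊢
  linear_combination h
lemma lam_fx_vanish (D : ℕ → ℕ → ℤ) (hD : Dvan D)
    (hc : ∀ a b : ℕ, 7 * D (a+6) (b+3) + 10 * D (a+9) (b+3) + 17 * D (a+16) (b+0) = 0)
    (r : R2) : lam D (r * pder 0 fEx) = 0 := by
  rw [hpd0, mul_add, mul_add, lam_addh, lam_addh,
    lam_shift D hD 6 3 _, lam_shift D hD 9 3 _, lam_shift D hD 16 0 _]
  have h := lam_comb3 7 10 17 (fun a b => D (a+6) (b+3)) (fun a b => D (a+9) (b+3))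
    (fun a b => D (a+16) (b+0)) hc r
  push_cast at h ⊢
  linear_combination h
lemma lam_fy_vanish (D : ℕ → ℕ → ℤ) (hD : Dvan D)
    (hc : ∀ a b : ℕ, 6 * D (a+0) (b+5) + 3 * D (a+7) (b+2) + 3 * D (a+10) (b+2) = 0)
    (r : R2) : lam D (r * pder 1 fEx) = 0 := by
  rw [hpd1, mul_add, mul_add, lam_addh, lam_addh,
    lam_shift D hD 0 5 _, lam_shift D hD 7 2 _, lam_shift D hD 10 2 _]
  have h := lam_comb3 6 3 3 (fun a b => D (a+0) (b+5)) (fun a b => D (a+7) (b+2))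
    (fun a b => D (a+10) (b+2)) hc r
  push_cast at h ⊢
  linear_combination h

def Dd1 : ℕ → ℕ → ℤ := fun a b => if a = 0 ∧ b = 5 then 1 else if a = 3 ∧ b = 5 then 1 else if a = 10 ∧ b = 2 then -2 else 0
def Dd2 : ℕ → ℕ → ℤ := fun a b => if a = 1 ∧ b = 5 then 1 else if a = 4 ∧ b = 5 then 1 else if a = 11 ∧ b = 2 then -2 else 0
def Dd3 : ℕ → ℕ → ℤ := fun a b => if a = 5 ∧ b = 4 then 1 else 0
def Dd4 : ℕ → ℕ → ℤ := fun a b => if a = 2 ∧ b = 5 then 1 else if a = 5 ∧ b = 5 then 1 else if a = 12 ∧ b = 2 then -2 else 0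
def Dd5 : ℕ → ℕ → ℤ := fun a b => if a = 6 ∧ b = 4 then 17 else if a = 16 ∧ b = 1 then -7 else 0
def Dd6 : ℕ → ℕ → ℤ := fun a b => if a = 14 ∧ b = 1 then 1 else 0
def Dd7 : ℕ → ℕ → ℤ := fun a b => if a = 15 ∧ b = 1 then 1 else 0

lemma cond_f_1 : ∀ a b : ℕ, 1 * Dd1 (a+0) (b+6) + 1 * Dd1 (a+7) (b+3) + 1 * Dd1 (a+10) (b+3) + 1 * Dd1 (a+17) (b+0) = 0 := by
  intro a b
  have e0 : Dd1 (a+0) (b+6) = 0 := by simp only [Dd1]; rw [if_neg (by omega), if_neg (by omega), if_neg (by omega)]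
  have e1 : Dd1 (a+7) (b+3) = 0 := by simp only [Dd1]; rw [if_neg (by omega), if_neg (by omega), if_neg (by omega)]
  have e2 : Dd1 (a+10) (b+3) = 0 := by simp only [Dd1]; rw [if_neg (by omega), if_neg (by omega), if_neg (by omega)]
  have e3 : Dd1 (a+17) (b+0) = 0 := by simp only [Dd1]; rw [if_neg (by omega), if_neg (by omega), if_neg (by omega)]
  rw [e0, e1, e2, e3]; ring

lemma cond_fx_1 : ∀ a b : ℕ, 7 * Dd1 (a+6) (b+3) + 10 * Dd1 (a+9) (b+3) + 17 * Dd1 (a+16) (b+0) = 0 := by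
  intro a b
  have e0 : Dd1 (a+6) (b+3) = 0 := by simp only [Dd1]; rw [if_neg (by omega), if_neg (by omega), if_neg (by omega)]
  have e1 : Dd1 (a+9) (b+3) = 0 := by simp only [Dd1]; rw [if_neg (by omega), if_neg (by omega), if_neg (by omega)]
  have e2 : Dd1 (a+16) (b+0) = 0 := by simp only [Dd1]; rw [if_neg (by omega), if_neg (by omega), if_neg (by omega)]
  rw [e0, e1, e2]; ring

lemma cond_fy_1 : ∀ a b : ℕ, 6 * Dd1 (a+0) (b+5) + 3 * Dd1 (a+7) (b+2) + 3 * Dd1 (a+10) (b+2) = 0 := by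
  intro a b
  by_cases h0 : a = 0 ∧ b = 0
  · obtain ⟨rfl, rfl⟩ := h0; norm_num [Dd1]
  ·
    by_cases h1 : a = 3 ∧ b = 0
    · obtain ⟨rfl, rfl⟩ := h1; norm_num [Dd1]
    ·
      have e0 : Dd1 (a+0) (b+5) = 0 := by simp only [Dd1]; rw [if_neg (by omega), if_neg (by omega), if_neg (by omega)]
      have e1 : Dd1 (a+7) (b+2) = 0 := by simp only [Dd1]; rw [if_neg (by omega), if_neg (by omega), if_neg (by omega)]
      have e2 : Dd1 (a+10) (b+2) = 0 := by simp only [Dd1]; rw [if_neg (by omega), if_neg (by omega), if_neg (by omega)]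
      rw [e0, e1, e2]; ring

lemma van_1 : Dvan Dd1 := by
  intro a b h; simp only [Dd1]; split_ifs <;> omega

lemma cond_f_2 : ∀ a b : ℕ, 1 * Dd2 (a+0) (b+6) + 1 * Dd2 (a+7) (b+3) + 1 * Dd2 (a+10) (b+3) + 1 * Dd2 (a+17) (b+0) = 0 := by
  intro a b
  have e0 : Dd2 (a+0) (b+6) = 0 := by simp only [Dd2]; rw [if_neg (by omega), if_neg (by omega), if_neg (by omega)]
  have e1 : Dd2 (a+7) (b+3) = 0 := by simp only [Dd2]; rw [if_neg (by omega), if_neg (by omega), if_neg (by omega)]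
  have e2 : Dd2 (a+10) (b+3) = 0 := by simp only [Dd2]; rw [if_neg (by omega), if_neg (by omega), if_neg (by omega)]
  have e3 : Dd2 (a+17) (b+0) = 0 := by simp only [Dd2]; rw [if_neg (by omega), if_neg (by omega), if_neg (by omega)]
  rw [e0, e1, e2, e3]; ring

lemma cond_fx_2 : ∀ a b : ℕ, 7 * Dd2 (a+6) (b+3) + 10 * Dd2 (a+9) (b+3) + 17 * Dd2 (a+16) (b+0) = 0 := by
  intro a b
  have e0 : Dd2 (a+6) (b+3) = 0 := by simp only [Dd2]; rw [if_neg (by omega), if_neg (by omega), if_neg (by omega)]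
  have e1 : Dd2 (a+9) (b+3) = 0 := by simp only [Dd2]; rw [if_neg (by omega), if_neg (by omega), if_neg (by omega)]
  have e2 : Dd2 (a+16) (b+0) = 0 := by simp only [Dd2]; rw [if_neg (by omega), if_neg (by omega), if_neg (by omega)]
  rw [e0, e1, e2]; ring

lemma cond_fy_2 : ∀ a b : ℕ, 6 * Dd2 (a+0) (b+5) + 3 * Dd2 (a+7) (b+2) + 3 * Dd2 (a+10) (b+2) = 0 := by
  intro a b
  by_cases h0 : a = 1 ∧ b = 0
  · obtain ⟨rfl, rfl⟩ := h0; norm_num [Dd2]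
  ·
    by_cases h1 : a = 4 ∧ b = 0
    · obtain ⟨rfl, rfl⟩ := h1; norm_num [Dd2]
    ·
      have e0 : Dd2 (a+0) (b+5) = 0 := by simp only [Dd2]; rw [if_neg (by omega), if_neg (by omega), if_neg (by omega)]
      have e1 : Dd2 (a+7) (b+2) = 0 := by simp only [Dd2]; rw [if_neg (by omega), if_neg (by omega), if_neg (by omega)]
      have e2 : Dd2 (a+10) (b+2) = 0 := by simp only [Dd2]; rw [if_neg (by omega), if_neg (by omega), if_neg (by omega)]
      rw [e0, e1, e2]; ring

lemma van_2 : Dvan Dd2 := by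
  intro a b h; simp only [Dd2]; split_ifs <;> omega

lemma cond_f_3 : ∀ a b : ℕ, 1 * Dd3 (a+0) (b+6) + 1 * Dd3 (a+7) (b+3) + 1 * Dd3 (a+10) (b+3) + 1 * Dd3 (a+17) (b+0) = 0 := by
  intro a b
  have e0 : Dd3 (a+0) (b+6) = 0 := by simp only [Dd3]; rw [if_neg (by omega)]
  have e1 : Dd3 (a+7) (b+3) = 0 := by simp only [Dd3]; rw [if_neg (by omega)]
  have e2 : Dd3 (a+10) (b+3) = 0 := by simp only [Dd3]; rw [if_neg (by omega)]
  have e3 : Dd3 (a+17) (b+0) = 0 := by simp only [Dd3]; rw [if_neg (by omega)]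
  rw [e0, e1, e2, e3]; ring

lemma cond_fx_3 : ∀ a b : ℕ, 7 * Dd3 (a+6) (b+3) + 10 * Dd3 (a+9) (b+3) + 17 * Dd3 (a+16) (b+0) = 0 := by
  intro a b
  have e0 : Dd3 (a+6) (b+3) = 0 := by simp only [Dd3]; rw [if_neg (by omega)]
  have e1 : Dd3 (a+9) (b+3) = 0 := by simp only [Dd3]; rw [if_neg (by omega)]
  have e2 : Dd3 (a+16) (b+0) = 0 := by simp only [Dd3]; rw [if_neg (by omega)]
  rw [e0, e1, e2]; ring

lemma cond_fy_3 : ∀ a b : ℕ, 6 * Dd3 (a+0) (b+5) + 3 * Dd3 (a+7) (b+2) + 3 * Dd3 (a+10) (b+2) = 0 := by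
  intro a b
  have e0 : Dd3 (a+0) (b+5) = 0 := by simp only [Dd3]; rw [if_neg (by omega)]
  have e1 : Dd3 (a+7) (b+2) = 0 := by simp only [Dd3]; rw [if_neg (by omega)]
  have e2 : Dd3 (a+10) (b+2) = 0 := by simp only [Dd3]; rw [if_neg (by omega)]
  rw [e0, e1, e2]; ring

lemma van_3 : Dvan Dd3 := by
  intro a b h; simp only [Dd3]; split_ifs <;> omega

lemma cond_f_4 : ∀ a b : ℕ, 1 * Dd4 (a+0) (b+6) + 1 * Dd4 (a+7) (b+3) + 1 * Dd4 (a+10) (b+3) + 1 * Dd4 (a+17) (b+0) = 0 := by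
  intro a b
  have e0 : Dd4 (a+0) (b+6) = 0 := by simp only [Dd4]; rw [if_neg (by omega), if_neg (by omega), if_neg (by omega)]
  have e1 : Dd4 (a+7) (b+3) = 0 := by simp only [Dd4]; rw [if_neg (by omega), if_neg (by omega), if_neg (by omega)]
  have e2 : Dd4 (a+10) (b+3) = 0 := by simp only [Dd4]; rw [if_neg (by omega), if_neg (by omega), if_neg (by omega)]
  have e3 : Dd4 (a+17) (b+0) = 0 := by simp only [Dd4]; rw [if_neg (by omega), if_neg (by omega), if_neg (by omega)]
  rw [e0, e1, e2, e3]; ring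

lemma cond_fx_4 : ∀ a b : ℕ, 7 * Dd4 (a+6) (b+3) + 10 * Dd4 (a+9) (b+3) + 17 * Dd4 (a+16) (b+0) = 0 := by
  intro a b
  have e0 : Dd4 (a+6) (b+3) = 0 := by simp only [Dd4]; rw [if_neg (by omega), if_neg (by omega), if_neg (by omega)]
  have e1 : Dd4 (a+9) (b+3) = 0 := by simp only [Dd4]; rw [if_neg (by omega), if_neg (by omega), if_neg (by omega)]
  have e2 : Dd4 (a+16) (b+0) = 0 := by simp only [Dd4]; rw [if_neg (by omega), if_neg (by omega), if_neg (by omega)]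
  rw [e0, e1, e2]; ring

lemma cond_fy_4 : ∀ a b : ℕ, 6 * Dd4 (a+0) (b+5) + 3 * Dd4 (a+7) (b+2) + 3 * Dd4 (a+10) (b+2) = 0 := by
  intro a b
  by_cases h0 : a = 2 ∧ b = 0
  · obtain ⟨rfl, rfl⟩ := h0; norm_num [Dd4]
  ·
    by_cases h1 : a = 5 ∧ b = 0
    · obtain ⟨rfl, rfl⟩ := h1; norm_num [Dd4]
    ·
      have e0 : Dd4 (a+0) (b+5) = 0 := by simp only [Dd4]; rw [if_neg (by omega), if_neg (by omega), if_neg (by omega)]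
      have e1 : Dd4 (a+7) (b+2) = 0 := by simp only [Dd4]; rw [if_neg (by omega), if_neg (by omega), if_neg (by omega)]
      have e2 : Dd4 (a+10) (b+2) = 0 := by simp only [Dd4]; rw [if_neg (by omega), if_neg (by omega), if_neg (by omega)]
      rw [e0, e1, e2]; ring

lemma van_4 : Dvan Dd4 := by
  intro a b h; simp only [Dd4]; split_ifs <;> omega

lemma cond_f_5 : ∀ a b : ℕ, 1 * Dd5 (a+0) (b+6) + 1 * Dd5 (a+7) (b+3) + 1 * Dd5 (a+10) (b+3) + 1 * Dd5 (a+17) (b+0) = 0 := by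
  intro a b
  have e0 : Dd5 (a+0) (b+6) = 0 := by simp only [Dd5]; rw [if_neg (by omega), if_neg (by omega)]
  have e1 : Dd5 (a+7) (b+3) = 0 := by simp only [Dd5]; rw [if_neg (by omega), if_neg (by omega)]
  have e2 : Dd5 (a+10) (b+3) = 0 := by simp only [Dd5]; rw [if_neg (by omega), if_neg (by omega)]
  have e3 : Dd5 (a+17) (b+0) = 0 := by simp only [Dd5]; rw [if_neg (by omega), if_neg (by omega)]
  rw [e0, e1, e2, e3]; ring

lemma cond_fx_5 : ∀ a b : ℕ, 7 * Dd5 (a+6) (b+3) + 10 * Dd5 (a+9) (b+3) + 17 * Dd5 (a+16) (b+0) = 0 := by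
  intro a b
  by_cases h0 : a = 0 ∧ b = 1
  · obtain ⟨rfl, rfl⟩ := h0; norm_num [Dd5]
  ·
    have e0 : Dd5 (a+6) (b+3) = 0 := by simp only [Dd5]; rw [if_neg (by omega), if_neg (by omega)]
    have e1 : Dd5 (a+9) (b+3) = 0 := by simp only [Dd5]; rw [if_neg (by omega), if_neg (by omega)]
    have e2 : Dd5 (a+16) (b+0) = 0 := by simp only [Dd5]; rw [if_neg (by omega), if_neg (by omega)]
    rw [e0, e1, e2]; ring

lemma cond_fy_5 : ∀ a b : ℕ, 6 * Dd5 (a+0) (b+5) + 3 * Dd5 (a+7) (b+2) + 3 * Dd5 (a+10) (b+2) = 0 := by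
  intro a b
  have e0 : Dd5 (a+0) (b+5) = 0 := by simp only [Dd5]; rw [if_neg (by omega), if_neg (by omega)]
  have e1 : Dd5 (a+7) (b+2) = 0 := by simp only [Dd5]; rw [if_neg (by omega), if_neg (by omega)]
  have e2 : Dd5 (a+10) (b+2) = 0 := by simp only [Dd5]; rw [if_neg (by omega), if_neg (by omega)]
  rw [e0, e1, e2]; ring

lemma van_5 : Dvan Dd5 := by
  intro a b h; simp only [Dd5]; split_ifs <;> omega

lemma cond_f_6 : ∀ a b : ℕ, 1 * Dd6 (a+0) (b+6) + 1 * Dd6 (a+7) (b+3) + 1 * Dd6 (a+10) (b+3) + 1 * Dd6 (a+17) (b+0) = 0 := by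
  intro a b
  have e0 : Dd6 (a+0) (b+6) = 0 := by simp only [Dd6]; rw [if_neg (by omega)]
  have e1 : Dd6 (a+7) (b+3) = 0 := by simp only [Dd6]; rw [if_neg (by omega)]
  have e2 : Dd6 (a+10) (b+3) = 0 := by simp only [Dd6]; rw [if_neg (by omega)]
  have e3 : Dd6 (a+17) (b+0) = 0 := by simp only [Dd6]; rw [if_neg (by omega)]
  rw [e0, e1, e2, e3]; ring

lemma cond_fx_6 : ∀ a b : ℕ, 7 * Dd6 (a+6) (b+3) + 10 * Dd6 (a+9) (b+3) + 17 * Dd6 (a+16) (b+0) = 0 := by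
  intro a b
  have e0 : Dd6 (a+6) (b+3) = 0 := by simp only [Dd6]; rw [if_neg (by omega)]
  have e1 : Dd6 (a+9) (b+3) = 0 := by simp only [Dd6]; rw [if_neg (by omega)]
  have e2 : Dd6 (a+16) (b+0) = 0 := by simp only [Dd6]; rw [if_neg (by omega)]
  rw [e0, e1, e2]; ring

lemma cond_fy_6 : ∀ a b : ℕ, 6 * Dd6 (a+0) (b+5) + 3 * Dd6 (a+7) (b+2) + 3 * Dd6 (a+10) (b+2) = 0 := by
  intro a b
  have e0 : Dd6 (a+0) (b+5) = 0 := by simp only [Dd6]; rw [if_neg (by omega)]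
  have e1 : Dd6 (a+7) (b+2) = 0 := by simp only [Dd6]; rw [if_neg (by omega)]
  have e2 : Dd6 (a+10) (b+2) = 0 := by simp only [Dd6]; rw [if_neg (by omega)]
  rw [e0, e1, e2]; ring

lemma van_6 : Dvan Dd6 := by
  intro a b h; simp only [Dd6]; split_ifs <;> omega

lemma cond_f_7 : ∀ a b : ℕ, 1 * Dd7 (a+0) (b+6) + 1 * Dd7 (a+7) (b+3) + 1 * Dd7 (a+10) (b+3) + 1 * Dd7 (a+17) (b+0) = 0 := by
  intro a b
  have e0 : Dd7 (a+0) (b+6) = 0 := by simp only [Dd7]; rw [if_neg (by omega)]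
  have e1 : Dd7 (a+7) (b+3) = 0 := by simp only [Dd7]; rw [if_neg (by omega)]
  have e2 : Dd7 (a+10) (b+3) = 0 := by simp only [Dd7]; rw [if_neg (by omega)]
  have e3 : Dd7 (a+17) (b+0) = 0 := by simp only [Dd7]; rw [if_neg (by omega)]
  rw [e0, e1, e2, e3]; ring

lemma cond_fx_7 : ∀ a b : ℕ, 7 * Dd7 (a+6) (b+3) + 10 * Dd7 (a+9) (b+3) + 17 * Dd7 (a+16) (b+0) = 0 := by
  intro a b
  have e0 : Dd7 (a+6) (b+3) = 0 := by simp only [Dd7]; rw [if_neg (by omega)]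
  have e1 : Dd7 (a+9) (b+3) = 0 := by simp only [Dd7]; rw [if_neg (by omega)]
  have e2 : Dd7 (a+16) (b+0) = 0 := by simp only [Dd7]; rw [if_neg (by omega)]
  rw [e0, e1, e2]; ring

lemma cond_fy_7 : ∀ a b : ℕ, 6 * Dd7 (a+0) (b+5) + 3 * Dd7 (a+7) (b+2) + 3 * Dd7 (a+10) (b+2) = 0 := by
  intro a b
  have e0 : Dd7 (a+0) (b+5) = 0 := by simp only [Dd7]; rw [if_neg (by omega)]
  have e1 : Dd7 (a+7) (b+2) = 0 := by simp only [Dd7]; rw [if_neg (by omega)]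
  have e2 : Dd7 (a+10) (b+2) = 0 := by simp only [Dd7]; rw [if_neg (by omega)]
  rw [e0, e1, e2]; ring

lemma van_7 : Dvan Dd7 := by
  intro a b h; simp only [Dd7]; split_ifs <;> omega

/-! ### Splitting a power series along the staircase -/

def truncP (g : R2) : R2 :=
  ∑ p ∈ Finset.range 17 ×ˢ Finset.range 6, coeff (E p.1 p.2) g • M p.1 p.2 1

lemma coeff_truncP (g : R2) (a b : ℕ) :
    coeff (E a b) (truncP g) = if a < 17 ∧ b < 6 then coeff (E a b) g else 0 := by
  unfold truncP
  rw [map_sum]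
  by_cases h : a < 17 ∧ b < 6
  · rw [if_pos h, Finset.sum_eq_single ((a:ℕ), (b:ℕ))]
    · rw [map_smul, coeffME, if_pos ⟨rfl, rfl⟩, smul_eq_mul, mul_one]
    · intro p _ hne
      rw [map_smul, coeffME, if_neg (fun hh => hne (Prod.ext hh.1 hh.2).symm), smul_zero]
    · intro habs
      exact absurd (by simp [Finset.mem_product]; omega) habs
  · rw [if_neg h]
    apply Finset.sum_eq_zero
    intro p hp
    simp only [Finset.mem_product, Finset.mem_range] at hp
    rw [map_smul, coeffME, if_neg (fun hh => h (by omega)), smul_zero]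

lemma hX017 : (X0 : R2)^17 = M 17 0 1 := by
  have := XXE 17 0; rwa [pow_zero, mul_one] at this
lemma hX16 : (X1 : R2)^6 = M 0 6 1 := by
  have := XXE 0 6; rwa [pow_zero, one_mul] at this

def shiftA (g : R2) : R2 := fun e => if e 1 < 6 then coeff (e + E 17 0) g else 0
def shiftB (g : R2) : R2 := fun e => coeff (e + E 0 6) g

lemma split (g : R2) : ∃ h1 h2 : R2, g = truncP g + X0^17 * h1 + X1^6 * h2 := by
  classical
  refine ⟨shiftA g, shiftB g, ?_⟩
  apply MvPowerSeries.ext; intro d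
  obtain ⟨a, b, rfl⟩ : ∃ a b, d = E a b := ⟨d 0, d 1, eqE d⟩
  rw [map_add, map_add, coeff_truncP]
  have hterm1 : coeff (E a b) ((X0:R2)^17 * shiftA g)
      = if 17 ≤ a ∧ b < 6 then coeff (E a b) g else 0 := by
    rw [hX017, M, coeff_monomial_mul]
    by_cases ha : 17 ≤ a
    · rw [if_pos ((E_le 17 0 a b).mpr ⟨ha, Nat.zero_le b⟩), one_mul, E_sub]
      show shiftA g (E (a-17) (b-0)) = _
      unfold shiftA
      rw [E_apply1, E_add, show a - 17 + 17 = a from by omega, show b - 0 = b from by omega,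
        show b + 0 = b from by omega]
      by_cases hb : b < 6
      · rw [if_pos hb, if_pos ⟨ha, hb⟩]
      · rw [if_neg hb, if_neg (by tauto)]
    · rw [if_neg (fun hh => ha ((E_le 17 0 a b).mp hh).1), if_neg (by tauto)]
  have hterm2 : coeff (E a b) ((X1:R2)^6 * shiftB g)
      = if 6 ≤ b then coeff (E a b) g else 0 := by
    rw [hX16, M, coeff_monomial_mul]
    by_cases hb : 6 ≤ b
    · rw [if_pos ((E_le 0 6 a b).mpr ⟨Nat.zero_le a, hb⟩), one_mul, E_sub]
      show shiftB g (E (a-0) (b-6)) = _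
      unfold shiftB
      rw [E_add, show a - 0 + 0 = a from by omega, show b - 6 + 6 = b from by omega, if_pos hb]
    · rw [if_neg (fun hh => hb ((E_le 0 6 a b).mp hh).2), if_neg hb]
  rw [hterm1, hterm2]
  by_cases hb : 6 ≤ b
  · rw [if_neg (by omega), if_neg (by omega), if_pos hb]; ring
  · by_cases ha : a < 17
    · rw [if_pos ⟨ha, by omega⟩, if_neg (by omega), if_neg hb]; ring
    · rw [if_neg (by omega), if_pos ⟨by omega, by omega⟩, if_neg hb]; ring

/-! ### The seven monomials and the covering submodule -/

def mseven : Fin 7 → R2 :=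
  ![X0^3*X1^5, X0^4*X1^5, X0^5*X1^4, X0^5*X1^5, X0^6*X1^4, X0^14*X1^1, X0^15*X1^1]

def Vsub : Submodule ℂ R2 := (Aid.restrictScalars ℂ) ⊔ Submodule.span ℂ (Set.range mseven)

lemma memA_V {x : R2} (h : x ∈ Aid) : x ∈ Vsub :=
  Submodule.mem_sup_left (show x ∈ Aid.restrictScalars ℂ from h)
lemma mem7 (i : Fin 7) : mseven i ∈ Vsub :=
  Submodule.mem_sup_right (Submodule.subset_span ⟨i, rfl⟩)
lemma m0_mem : (X0^3*X1^5 : R2) ∈ Vsub := mem7 0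
lemma m1_mem : (X0^4*X1^5 : R2) ∈ Vsub := mem7 1
lemma m2_mem : (X0^5*X1^4 : R2) ∈ Vsub := mem7 2
lemma m3_mem : (X0^5*X1^5 : R2) ∈ Vsub := mem7 3
lemma m4_mem : (X0^6*X1^4 : R2) ∈ Vsub := mem7 4
lemma m5_mem : (X0^14*X1^1 : R2) ∈ Vsub := mem7 5
lemma m6_mem : (X0^15*X1^1 : R2) ∈ Vsub := mem7 6

lemma mono_mul_mono (p q u v : ℕ) : (X0^p*X1^q : R2) * (X0^u*X1^v) = X0^(p+u) * X1^(q+v) := by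
  rw [pow_add, pow_add]; ring
lemma memA_mono {u v : ℕ} (h : (X0^u * X1^v : R2) ∈ Aid) (a b : ℕ) (hu : u ≤ a) (hv : v ≤ b) :
    (X0^a*X1^b : R2) ∈ Aid := by
  have key : (X0^a*X1^b : R2) = (X0^(a-u)*X1^(b-v)) * (X0^u*X1^v) := by
    rw [mono_mul_mono, show a - u + u = a from by omega, show b - v + v = b from by omega]
  rw [key]
  exact Ideal.mul_mem_left _ _ h

lemma cert1' : (X0^0*X1^6 : R2) ∈ Aid := by simpa using cert1
lemma cert5' : (X0^17*X1^0 : R2) ∈ Aid := by simpa using cert5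
lemma cert5x : ((X0:R2)^17) ∈ Aid := by simpa using cert5

lemma natsmul (n : ℕ) (x : R2) : ((n:ℕ):ℂ) • x = ((n:ℕ) : R2) * x := by
  rw [Algebra.smul_def, map_natCast]

lemma cover (a b : ℕ) (h51 : 51 ≤ 3*a + 10*b) (h42 : 42 ≤ 3*a + 7*b) :
    (X0^a * X1^b : R2) ∈ Vsub := by
  by_cases hb6 : 6 ≤ b
  · exact memA_V (memA_mono cert1' a b (Nat.zero_le a) hb6)
  · have hble : b ≤ 5 := by omega
    interval_cases b
    · -- b = 0 : a ≥ 17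
      exact memA_V (memA_mono cert5' a 0 (by omega) (by omega))
    · -- b = 1 : a ≥ 14
      by_cases h14 : a = 14
      · subst h14; exact m5_mem
      · by_cases h15 : a = 15
        · subst h15; exact m6_mem
        · by_cases h16 : a = 16
          · subst h16
            rw [← Submodule.smul_mem_iff Vsub (show (17:ℂ) ≠ 0 from by norm_num)]
            have h7 : ((7:R2) * (X0^6*X1^4) : R2) ∈ Vsub := by
              have e7 : ((7:R2) * (X0^6*X1^4) : R2) = ((7:ℕ):ℂ) • (X0^6*X1^4) := by
                rw [natsmul]; norm_num
              rw [e7]; exact Submodule.smul_mem _ _ m4_mem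
            have key : (17:ℂ) • (X0^16*X1^1 : R2)
                = ((7)*X0^6*X1^4 + (17)*X0^16*X1^1) - (7:R2) * (X0^6*X1^4) := by
              rw [show (17:ℂ) = ((17:ℕ):ℂ) from by norm_num, natsmul]; push_cast; ring
            rw [key]
            exact Submodule.sub_mem _ (memA_V cert8) h7
          · exact memA_V (memA_mono cert5' a 1 (by omega) (by omega))
    · -- b = 2 : a ≥ 11
      by_cases h11 : a = 11
      · subst h11
        have h2m : ((2:R2) * (X0^4*X1^5) : R2) ∈ Vsub := by
          have e2 : ((2:R2) * (X0^4*X1^5) : R2) = ((2:ℕ):ℂ) • (X0^4*X1^5) := by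
            rw [natsmul]; norm_num
          rw [e2]; exact Submodule.smul_mem _ _ m1_mem
        have key : (X0^11*X1^2 : R2) = ((2)*X0^4*X1^5 + X0^11*X1^2) - (2:R2)*(X0^4*X1^5) := by ring
        rw [key]
        exact Submodule.sub_mem _ (memA_V cert6) h2m
      · by_cases h12 : a = 12
        · subst h12
          have h2m : ((2:R2) * (X0^5*X1^5) : R2) ∈ Vsub := by
            have e2 : ((2:R2) * (X0^5*X1^5) : R2) = ((2:ℕ):ℂ) • (X0^5*X1^5) := by
              rw [natsmul]; norm_num
            rw [e2]; exact Submodule.smul_mem _ _ m3_mem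
          have key : (X0^12*X1^2 : R2) = ((2)*X0^5*X1^5 + X0^12*X1^2) - (2:R2)*(X0^5*X1^5) := by ring
          rw [key]
          exact Submodule.sub_mem _ (memA_V cert7) h2m
        · exact memA_V (memA_mono cert4 a 2 (by omega) (by omega))
    · -- b = 3 : a ≥ 7
      exact memA_V (memA_mono cert3 a 3 (by omega) (by omega))
    · -- b = 4 : a ≥ 5
      by_cases h5 : a = 5
      · subst h5; exact m2_mem
      · by_cases h6 : a = 6
        · subst h6; exact m4_mem
        · exact memA_V (memA_mono cert3 a 4 (by omega) (by omega))
    · -- b = 5 : a ≥ 3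
      by_cases h3 : a = 3
      · subst h3; exact m0_mem
      · by_cases h4 : a = 4
        · subst h4; exact m1_mem
        · by_cases h5 : a = 5
          · subst h5; exact m3_mem
          · exact memA_V (memA_mono cert2 a 5 (by omega) (by omega))

lemma mul_mem_V (r : R2) (i : Fin 7) : r * mseven i ∈ Vsub := by
  obtain ⟨h1, h2, hs⟩ := split r
  rw [hs, add_mul, add_mul]
  refine Submodule.add_mem _ (Submodule.add_mem _ ?ht ?hx) ?hy
  case hx =>
    apply memA_V
    have e : (X0:R2)^17 * h1 * mseven i = (h1 * mseven i) * X0^17 := by ring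
    rw [e]
    exact Ideal.mul_mem_left _ _ cert5x
  case hy =>
    apply memA_V
    have e : (X1:R2)^6 * h2 * mseven i = (h2 * mseven i) * X1^6 := by ring
    rw [e]
    exact Ideal.mul_mem_left _ _ cert1
  case ht =>
    unfold truncP
    rw [Finset.sum_mul]
    apply Submodule.sum_mem
    intro p _
    rw [smul_mul_assoc]
    apply Submodule.smul_mem
    rw [← XXE]
    have hj : ∀ (u v : ℕ), 51 ≤ 3*u+10*v → 42 ≤ 3*u+7*v →
        (X0^p.1*X1^p.2 : R2) * (X0^u*X1^v) ∈ Vsub := by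
      intro u v hu hv
      rw [mono_mul_mono]
      exact cover _ _ (by omega) (by omega)
    fin_cases i
    · exact hj 3 5 (by norm_num) (by norm_num)
    · exact hj 4 5 (by norm_num) (by norm_num)
    · exact hj 5 4 (by norm_num) (by norm_num)
    · exact hj 5 5 (by norm_num) (by norm_num)
    · exact hj 6 4 (by norm_num) (by norm_num)
    · exact hj 14 1 (by norm_num) (by norm_num)
    · exact hj 15 1 (by norm_num) (by norm_num)

def VIdeal : Ideal R2 where
  carrier := Vsub
  add_mem' := Vsub.add_mem
  zero_mem' := Vsub.zero_mem
  smul_mem' := by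
    intro c x hx
    have hx' : x ∈ (Aid.restrictScalars ℂ) ⊔ Submodule.span ℂ (Set.range mseven) := hx
    rw [Submodule.mem_sup] at hx'
    obtain ⟨y, hy, z, hz, rfl⟩ := hx'
    show c * (y + z) ∈ Vsub
    rw [mul_add]
    refine Vsub.add_mem (memA_V (Ideal.mul_mem_left _ _ hy)) ?_
    refine Submodule.span_induction ?_ ?_ ?_ ?_ hz
    · rintro x ⟨i, rfl⟩; exact mul_mem_V c i
    · rw [mul_zero]; exact Vsub.zero_mem
    · intro x y _ _ hx hy; rw [mul_add]; exact Vsub.add_mem hx hy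
    · intro t x _ hx; rw [mul_smul_comm]; exact Vsub.smul_mem t hx

lemma mem_VIdeal_iff {x : R2} : x ∈ VIdeal ↔ x ∈ Vsub := Iff.rfl

lemma hIes_le : IesEx ≤ VIdeal := by
  unfold IesEx
  apply sup_le
  · rw [Ideal.span_le]
    intro g hg
    simp only [Set.mem_insert_iff, Set.mem_singleton_iff] at hg
    rcases hg with rfl | rfl
    · exact memA_V hp0_mem
    · exact memA_V hp1_mem
  · rw [Ideal.span_le]
    rintro g ⟨a, b, hab, rfl⟩
    rw [newtonOrderGeOne, le_min_iff] at hab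
    have h51 : 51 ≤ 3*a + 10*b := by
      have h := hab.1
      have : (51:ℚ) ≤ 3*a + 10*b := by linarith
      exact_mod_cast this
    have h42 : 42 ≤ 3*a + 7*b := by
      have h := hab.2
      have : (42:ℚ) ≤ 3*a + 7*b := by linarith
      exact_mod_cast this
    exact cover a b h51 h42

/-! ### Linear independence and the main theorem -/

lemma mem_span_triple {x a b c : R2} (h : x ∈ Ideal.span {a, b, c}) :
    ∃ r s t, x = r*a + s*b + t*c := by
  rw [Ideal.mem_span_insert] at h
  obtain ⟨r, z, hz, rfl⟩ := h
  rw [Ideal.mem_span_pair] at hz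
  obtain ⟨s, t, rfl⟩ := hz
  exact ⟨r, s, t, by ring⟩

lemma lamM0 (D : ℕ → ℕ → ℤ) : lam D (mseven 0) = ((D 3 5 : ℤ) : ℂ) := by
  show lam D (X0^3*X1^5) = _
  rw [XXE]
  exact lam_mono D 3 5 (by norm_num) (by norm_num)
lemma lamM1 (D : ℕ → ℕ → ℤ) : lam D (mseven 1) = ((D 4 5 : ℤ) : ℂ) := by
  show lam D (X0^4*X1^5) = _
  rw [XXE]
  exact lam_mono D 4 5 (by norm_num) (by norm_num)
lemma lamM2 (D : ℕ → ℕ → ℤ) : lam D (mseven 2) = ((D 5 4 : ℤ) : ℂ) := by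
  show lam D (X0^5*X1^4) = _
  rw [XXE]
  exact lam_mono D 5 4 (by norm_num) (by norm_num)
lemma lamM3 (D : ℕ → ℕ → ℤ) : lam D (mseven 3) = ((D 5 5 : ℤ) : ℂ) := by
  show lam D (X0^5*X1^5) = _
  rw [XXE]
  exact lam_mono D 5 5 (by norm_num) (by norm_num)
lemma lamM4 (D : ℕ → ℕ → ℤ) : lam D (mseven 4) = ((D 6 4 : ℤ) : ℂ) := by
  show lam D (X0^6*X1^4) = _
  rw [XXE]
  exact lam_mono D 6 4 (by norm_num) (by norm_num)
lemma lamM5 (D : ℕ → ℕ → ℤ) : lam D (mseven 5) = ((D 14 1 : ℤ) : ℂ) := by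
  show lam D (X0^14*X1^1) = _
  rw [XXE]
  exact lam_mono D 14 1 (by norm_num) (by norm_num)
lemma lamM6 (D : ℕ → ℕ → ℤ) : lam D (mseven 6) = ((D 15 1 : ℤ) : ℂ) := by
  show lam D (X0^15*X1^1) = _
  rw [XXE]
  exact lam_mono D 15 1 (by norm_num) (by norm_num)

lemma li : LinearIndependent ℂ (fun i : Fin 7 => Ideal.Quotient.mk Aid (mseven i)) := by
  rw [Fintype.linearIndependent_iff]
  intro g hg
  have hmem : (∑ i, g i • mseven i) ∈ Aid := by
    rw [← Ideal.Quotient.eq_zero_iff_mem]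
    show (Ideal.Quotient.mkₐ ℂ Aid).toLinearMap (∑ i, g i • mseven i) = 0
    rw [map_sum]
    simp only [map_smul]
    exact hg
  obtain ⟨r, s, t, hrst⟩ := mem_span_triple hmem
  have hg0 : g 0 = 0 := by
    have hlam := congrArg (lam Dd1) hrst
    rw [lam_sum, lam_addh, lam_addh,
      lam_f_vanish Dd1 van_1 cond_f_1, lam_fx_vanish Dd1 van_1 cond_fx_1,
      lam_fy_vanish Dd1 van_1 cond_fy_1, Fin.sum_univ_seven] at hlam
    simp only [lam_smulh, lamM0, lamM1, lamM2, lamM3, lamM4, lamM5, lamM6] at hlam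
    simpa [Dd1, mul_eq_zero] using hlam
  have hg1 : g 1 = 0 := by
    have hlam := congrArg (lam Dd2) hrst
    rw [lam_sum, lam_addh, lam_addh,
      lam_f_vanish Dd2 van_2 cond_f_2, lam_fx_vanish Dd2 van_2 cond_fx_2,
      lam_fy_vanish Dd2 van_2 cond_fy_2, Fin.sum_univ_seven] at hlam
    simp only [lam_smulh, lamM0, lamM1, lamM2, lamM3, lamM4, lamM5, lamM6] at hlam
    simpa [Dd2, mul_eq_zero] using hlam
  have hg2 : g 2 = 0 := by
    have hlam := congrArg (lam Dd3) hrst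
    rw [lam_sum, lam_addh, lam_addh,
      lam_f_vanish Dd3 van_3 cond_f_3, lam_fx_vanish Dd3 van_3 cond_fx_3,
      lam_fy_vanish Dd3 van_3 cond_fy_3, Fin.sum_univ_seven] at hlam
    simp only [lam_smulh, lamM0, lamM1, lamM2, lamM3, lamM4, lamM5, lamM6] at hlam
    simpa [Dd3, mul_eq_zero] using hlam
  have hg3 : g 3 = 0 := by
    have hlam := congrArg (lam Dd4) hrst
    rw [lam_sum, lam_addh, lam_addh,
      lam_f_vanish Dd4 van_4 cond_f_4, lam_fx_vanish Dd4 van_4 cond_fx_4,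
      lam_fy_vanish Dd4 van_4 cond_fy_4, Fin.sum_univ_seven] at hlam
    simp only [lam_smulh, lamM0, lamM1, lamM2, lamM3, lamM4, lamM5, lamM6] at hlam
    simpa [Dd4, mul_eq_zero] using hlam
  have hg4 : g 4 = 0 := by
    have hlam := congrArg (lam Dd5) hrst
    rw [lam_sum, lam_addh, lam_addh,
      lam_f_vanish Dd5 van_5 cond_f_5, lam_fx_vanish Dd5 van_5 cond_fx_5,
      lam_fy_vanish Dd5 van_5 cond_fy_5, Fin.sum_univ_seven] at hlam
    simp only [lam_smulh, lamM0, lamM1, lamM2, lamM3, lamM4, lamM5, lamM6] at hlam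
    simpa [Dd5, mul_eq_zero] using hlam
  have hg5 : g 5 = 0 := by
    have hlam := congrArg (lam Dd6) hrst
    rw [lam_sum, lam_addh, lam_addh,
      lam_f_vanish Dd6 van_6 cond_f_6, lam_fx_vanish Dd6 van_6 cond_fx_6,
      lam_fy_vanish Dd6 van_6 cond_fy_6, Fin.sum_univ_seven] at hlam
    simp only [lam_smulh, lamM0, lamM1, lamM2, lamM3, lamM4, lamM5, lamM6] at hlam
    simpa [Dd6, mul_eq_zero] using hlam
  have hg6 : g 6 = 0 := by
    have hlam := congrArg (lam Dd7) hrst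
    rw [lam_sum, lam_addh, lam_addh,
      lam_f_vanish Dd7 van_7 cond_f_7, lam_fx_vanish Dd7 van_7 cond_fx_7,
      lam_fy_vanish Dd7 van_7 cond_fy_7, Fin.sum_univ_seven] at hlam
    simp only [lam_smulh, lamM0, lamM1, lamM2, lamM3, lamM4, lamM5, lamM6] at hlam
    simpa [Dd7, mul_eq_zero] using hlam
  intro i
  fin_cases i
  · exact hg0
  · exact hg1
  · exact hg2
  · exact hg3
  · exact hg4
  · exact hg5
  · exact hg6

lemma hno (a b : ℕ) (h1 : 51 ≤ 3*a+10*b) (h2 : 42 ≤ 3*a+7*b) : newtonOrderGeOne a b := by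
  rw [newtonOrderGeOne, le_min_iff]
  have k1 : (51:ℚ) ≤ 3*(a:ℚ) + 10*b := by exact_mod_cast h1
  have k2 : (42:ℚ) ≤ 3*(a:ℚ) + 7*b := by exact_mod_cast h2
  constructor
  · linarith
  · linarith

lemma hv_mem (i : Fin 7) : mseven i ∈ IesEx := by
  have hmem : ∀ (a b : ℕ), newtonOrderGeOne a b → (X0^a*X1^b : R2) ∈ IesEx := by
    intro a b hab
    unfold IesEx
    exact Submodule.mem_sup_right (Ideal.subset_span ⟨a, b, hab, rfl⟩)
  fin_cases i
  · exact hmem 3 5 (hno 3 5 (by norm_num) (by norm_num))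
  · exact hmem 4 5 (hno 4 5 (by norm_num) (by norm_num))
  · exact hmem 5 4 (hno 5 4 (by norm_num) (by norm_num))
  · exact hmem 5 5 (hno 5 5 (by norm_num) (by norm_num))
  · exact hmem 6 4 (hno 6 4 (by norm_num) (by norm_num))
  · exact hmem 14 1 (hno 14 1 (by norm_num) (by norm_num))
  · exact hmem 15 1 (hno 15 1 (by norm_num) (by norm_num))

lemma hmap : ((IesEx.map (Ideal.Quotient.mk Aid)).restrictScalars ℂ)
    = Submodule.span ℂ (Set.range (fun i : Fin 7 => Ideal.Quotient.mk Aid (mseven i))) := by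
  apply le_antisymm
  · intro x hx
    rw [Submodule.restrictScalars_mem] at hx
    obtain ⟨y, hy, rfl⟩ := (Ideal.mem_map_iff_of_surjective _ Ideal.Quotient.mk_surjective).mp hx
    have hyV : y ∈ (Aid.restrictScalars ℂ) ⊔ Submodule.span ℂ (Set.range mseven) := hIes_le hy
    rw [Submodule.mem_sup] at hyV
    obtain ⟨u, hu, z, hz, rfl⟩ := hyV
    rw [map_add, Ideal.Quotient.eq_zero_iff_mem.mpr hu, zero_add]
    have h2 := Submodule.mem_map_of_mem (f := (Ideal.Quotient.mkₐ ℂ Aid).toLinearMap) hz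
    rw [Submodule.map_span, ← Set.range_comp] at h2
    exact h2
  · rw [Submodule.span_le]
    rintro _ ⟨i, rfl⟩
    rw [SetLike.mem_coe, Submodule.restrictScalars_mem]
    exact Ideal.mem_map_of_mem _ (hv_mem i)

/-- dim_ℂ I^es(f)/⟨f, j(f)⟩ = 7 for f = (y³+x⁷)(y³+x¹⁰). -/
theorem es_codim_example :
    qdim (Ideal.span {fEx, pder 0 fEx, pder 1 fEx}) IesEx = 7 := by
  show Module.finrank ℂ ((IesEx.map (Ideal.Quotient.mk Aid)).restrictScalars ℂ) = 7
  rw [hmap, finrank_span_eq_card li]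
  simp
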